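/- Let G be a finite simple graph and L a list assignment on G with |L(v)| ≥ 4 for every vertex v. Suppose S is a set of vertices of G such that every vertex of S has degree exactly 4 in G, and the induced subgraph G[S] is a cycle with one chord (a cycle on |S| ≥ 4 vertices plus a single edge between two non-consecutive vertices of the cycle). If the induced subgraph of G on V(G) \ S has a proper L-coloring, then G has a proper L-coloring. -/

import Mathlib

open SimpleGraph Finset

private def pick (s : Finset ℕ) : ℕ := if h : s.Nonempty then s.min' h else 0

private lemma pick_mem {s : Finset ℕ} (h : s.Nonempty) : pick s ∈ s := by
  rw [pick, dif_pos h]; exact s.min'_mem h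

private lemma sdiff_nonempty_of_card_lt {X Y : Finset ℕ} (h : Y.card < X.card) :
    (X \ Y).Nonempty := by
  rw [← Finset.card_pos]
  have := Finset.card_le_card_sdiff_add_card (s := X) (t := Y)
  omega

private def chain (A' F : ℕ → Finset ℕ) (c0 : ℕ) : ℕ → ℕ
  | 0 => c0
  | t + 1 => pick (A' (t + 1) \ insert (chain A' F c0 t) (F (t + 1)))

open Fin.CommRing Fin.NatCast in
private lemma chorded_core (m : ℕ) (hm : 4 ≤ m) (i j : Fin m) (hne : i ≠ j)
    (hnc : ¬ (cycleGraph m).Adj i j) (A : Fin m → Finset ℕ)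
    (hA : ∀ k, 2 ≤ (A k).card) (hAi : 3 ≤ (A i).card) (hAj : 3 ≤ (A j).card) :
    ∃ g : Fin m → ℕ, (∀ k, g k ∈ A k) ∧
      ∀ a b, (cycleGraph m ⊔ fromEdgeSet {s(i, j)}).Adj a b → g a ≠ g b := by
  classical
  obtain ⟨n, rfl⟩ : ∃ n, m = n + 2 := ⟨m - 2, by omega⟩
  have hn2 : 2 ≤ n := by omega
  set d : Fin (n + 2) := j - i with hd
  have hd0 : d ≠ 0 := by
    intro h; exact hne (sub_eq_zero.mp h).symm
  have hd1 : d ≠ 1 := fun h => hnc (cycleGraph_adj.mpr (Or.inr h))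
  have hdm : d ≠ -1 := by
    intro h
    apply hnc
    apply cycleGraph_adj.mpr
    left
    have : i - j = -d := by rw [hd]; ring
    rw [this, h]; ring
  have hv0 : d.val ≠ 0 := by
    intro h; exact hd0 (Fin.ext (by simp [h]))
  have hv1 : d.val ≠ 1 := by
    intro h; exact hd1 (Fin.ext (by simp [h]))
  have hvm : d.val ≠ n + 1 := by
    intro h; exact hdm (Fin.ext (by rw [h, Fin.coe_neg_one]))
  have hvlt : d.val < n + 2 := d.isLt
  set A' : ℕ → Finset ℕ := fun t => A (i + (t : Fin (n + 2))) with hA'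
  have hA'0 : A' 0 = A i := by simp [hA']
  have hA'd : A' d.val = A j := by
    simp only [hA', Fin.cast_val_eq_self]
    congr 1
    rw [hd]
    ring
  have hA'c : ∀ t, 2 ≤ (A' t).card := fun t => hA _
  set c0 : ℕ := if 3 ≤ (A' (n + 1)).card then pick (A' 0) else pick (A' 0 \ A' (n + 1))
    with hc0def
  have hc0A : c0 ∈ A' 0 := by
    by_cases h3 : 3 ≤ (A' (n + 1)).card
    · rw [hc0def, if_pos h3]
      apply pick_mem
      rw [← Finset.card_pos]
      have := hA'c 0
      omega
    · rw [hc0def, if_neg h3]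
      have hlt : (A' (n + 1)).card < (A' 0).card := by
        rw [hA'0]; omega
      exact (mem_sdiff.mp (pick_mem (sdiff_nonempty_of_card_lt hlt))).1
  have hc0no : ¬ 3 ≤ (A' (n + 1)).card → c0 ∉ A' (n + 1) := by
    intro h3
    rw [hc0def, if_neg h3]
    have hlt : (A' (n + 1)).card < (A' 0).card := by
      rw [hA'0]; omega
    exact (mem_sdiff.mp (pick_mem (sdiff_nonempty_of_card_lt hlt))).2
  set F : ℕ → Finset ℕ :=
    fun t => if t = d.val ∨ (t = n + 1 ∧ 3 ≤ (A' (n + 1)).card) then {c0} else ∅ with hF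
  set h : ℕ → ℕ := chain A' F c0 with hh
  have hstep : ∀ t, h (t + 1) ∈ A' (t + 1) \ insert (h t) (F (t + 1)) := by
    intro t
    rw [hh]
    show chain A' F c0 (t + 1) ∈ _
    rw [chain]
    apply pick_mem
    apply sdiff_nonempty_of_card_lt
    have hins : (insert (chain A' F c0 t) (F (t + 1))).card ≤ (F (t + 1)).card + 1 :=
      card_insert_le _ _
    by_cases hc : (t + 1) = d.val ∨ ((t + 1) = n + 1 ∧ 3 ≤ (A' (n + 1)).card)
    · have hFc : F (t + 1) = {c0} := by rw [hF]; exact if_pos hc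
      have h3 : 3 ≤ (A' (t + 1)).card := by
        rcases hc with hcc | ⟨hcc, h3⟩
        · rw [hcc, hA'd]; exact hAj
        · rw [hcc]; exact h3
      rw [hFc] at hins ⊢
      simp only [card_singleton] at hins
      omega
    · have hFc : F (t + 1) = ∅ := by rw [hF]; exact if_neg hc
      rw [hFc] at hins ⊢
      simp only [card_empty] at hins
      have := hA'c (t + 1)
      omega
  have hmem : ∀ t, h t ∈ A' t := by
    intro t
    cases t with
    | zero => exact hc0A
    | succ t => exact (mem_sdiff.mp (hstep t)).1
  have hne' : ∀ t, h (t + 1) ≠ h t := by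
    intro t
    have := (mem_sdiff.mp (hstep t)).2
    simp only [mem_insert, not_or] at this
    exact this.1
  have hnF : ∀ t, h (t + 1) ∉ F (t + 1) := by
    intro t
    have := (mem_sdiff.mp (hstep t)).2
    simp only [mem_insert, not_or] at this
    exact this.2
  have h0 : h 0 = c0 := rfl
  have hdne : h d.val ≠ c0 := by
    obtain ⟨t, ht⟩ : ∃ t, d.val = t + 1 := ⟨d.val - 1, by omega⟩
    have := hnF t
    rw [← ht] at this
    have hFc : F d.val = {c0} := by rw [hF]; exact if_pos (Or.inl rfl)
    rw [hFc] at this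
    simpa using this
  have hlast : h (n + 1) ≠ c0 := by
    by_cases h3 : 3 ≤ (A' (n + 1)).card
    · have := hnF n
      have hFc : F (n + 1) = {c0} := by rw [hF]; exact if_pos (Or.inr ⟨rfl, h3⟩)
      rw [hFc] at this
      simpa using this
    · intro hcontra
      exact hc0no h3 (hcontra ▸ hmem (n + 1))
  have hconsec : ∀ a b : Fin (n + 2), b - a = 1 → h (a - i).val ≠ h (b - i).val := by
    intro a b hab
    have hq : b - i = (a - i) + 1 := by
      rw [← hab]; ring
    have hqval : (b - i).val = ((a - i).val + 1) % (n + 2) := by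
      rw [hq, Fin.val_add, Fin.val_one]
    by_cases hp : (a - i).val = n + 1
    · have hbz : (b - i).val = 0 := by rw [hqval, hp, Nat.mod_self]
      rw [hbz, hp, h0]
      exact hlast
    · have hlt : (a - i).val + 1 < n + 2 := by have := (a - i).isLt; omega
      have hbv : (b - i).val = (a - i).val + 1 := by rw [hqval, Nat.mod_eq_of_lt hlt]
      rw [hbv]
      exact (hne' _).symm
  refine ⟨fun k => h (k - i).val, ?_, ?_⟩
  · intro k
    have := hmem (k - i).val
    rw [hA'] at this
    simp only [Fin.cast_val_eq_self] at this
    rwa [show i + (k - i) = k by ring] at this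
  · intro a b hadj
    rw [sup_adj] at hadj
    rcases hadj with hcyc | hch
    · rcases cycleGraph_adj.mp hcyc with h1 | h1
      · exact (hconsec b a h1).symm
      · exact hconsec a b h1
    · rw [fromEdgeSet_adj] at hch
      obtain ⟨hmem', _⟩ := hch
      simp only [Set.mem_singleton_iff, Sym2.eq_iff] at hmem'
      rcases hmem' with ⟨rfl, rfl⟩ | ⟨rfl, rfl⟩
      · show h (a - a).val ≠ h (b - a).val
        have hii : (a - a).val = 0 := by simp
        rw [hii, h0]
        exact fun hc => hdne hc.symm
      · show h (a - b).val ≠ h (b - b).val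
        have hii : (b - b).val = 0 := by simp
        rw [hii, h0]
        exact hdne
open Fin.CommRing in
/-- Let `G` be a finite simple graph and `L` a list assignment with
`|L v| ≥ 4` for all `v`.  If `S` is a set of vertices all of degree exactly `4` in `G`
whose induced subgraph `G[S]` is a cycle with one chord (a cycle on `m ≥ 4` vertices plus
one edge between two distinct non-consecutive cycle vertices), and the induced subgraph
of `G` on the complement of `S` has a proper `L`-coloring, then `G` has a proper
`L`-coloring. -/
theorem extend_coloring_chorded_cycle {V : Type*} [Fintype V]
    (G : SimpleGraph V) [DecidableRel G.Adj]
    (L : V → Finset ℕ) (hL : ∀ v, 4 ≤ (L v).card)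
    (S : Set V) (hdeg : ∀ v ∈ S, G.degree v = 4)
    (m : ℕ) (hm : 4 ≤ m) (i j : Fin m) (hne : i ≠ j)
    (hnonconsec : ¬ (cycleGraph m).Adj i j)
    (hchord : Nonempty (G.induce S ≃g (cycleGraph m ⊔ fromEdgeSet {s(i, j)})))
    (hcol : ∃ f : ↥(Sᶜ) → ℕ, (∀ v : ↥(Sᶜ), f v ∈ L ↑v) ∧
      ∀ x y, (G.induce Sᶜ).Adj x y → f x ≠ f y) :
    ∃ f : V → ℕ, (∀ v, f v ∈ L v) ∧ ∀ x y, G.Adj x y → f x ≠ f y := by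
  classical
  obtain ⟨n, rfl⟩ : ∃ n, m = n + 2 := ⟨m - 2, by omega⟩
  obtain ⟨f, hf1, hf2⟩ := hcol
  obtain ⟨e⟩ := hchord
  set H := cycleGraph (n + 2) ⊔ fromEdgeSet {s(i, j)} with hH
  set ψ : Fin (n + 2) → V := fun k => ((e.symm k : ↥S) : V) with hψ
  have hψS : ∀ k, ψ k ∈ S := fun k => (e.symm k).2
  have hψadj : ∀ k l, H.Adj k l → G.Adj (ψ k) (ψ l) := by
    intro k l hkl
    have h2 : (G.induce S).Adj (e.symm k) (e.symm l) := e.symm.map_adj_iff.mpr hkl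
    exact h2
  have hψinj : Function.Injective ψ := by
    intro a b hab
    exact e.symm.toEquiv.injective (Subtype.ext hab)
  have hψe : ∀ (v : V) (hv : v ∈ S), ψ (e ⟨v, hv⟩) = v := by
    intro v hv
    show ((e.symm (e ⟨v, hv⟩) : ↥S) : V) = v
    rw [e.symm_apply_apply]
  set fc : V → ℕ := fun u => if h : u ∈ S then 0 else f ⟨u, h⟩ with hfc
  set Forb : V → Finset ℕ :=
    fun v => ((G.neighborFinset v).filter (fun u => u ∉ S)).image fc with hForb
  set A : V → Finset ℕ := fun v => L v \ Forb v with hA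
  have hAcard : ∀ (k : Fin (n + 2)) (T : Finset (Fin (n + 2))),
      (∀ x ∈ T, H.Adj k x) → T.card ≤ (A (ψ k)).card := by
    intro k T hT
    have himg : T.image ψ ⊆ (G.neighborFinset (ψ k)).filter (fun u => u ∈ S) := by
      intro x hx
      obtain ⟨y, hy, rfl⟩ := Finset.mem_image.mp hx
      rw [Finset.mem_filter, SimpleGraph.mem_neighborFinset]
      exact ⟨hψadj k y (hT y hy), hψS y⟩
    have h1 : T.card ≤ ((G.neighborFinset (ψ k)).filter (fun u => u ∈ S)).card := by
      calc T.card = (T.image ψ).card := (Finset.card_image_of_injective T hψinj).symm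
        _ ≤ _ := Finset.card_le_card himg
    have h2 : ((G.neighborFinset (ψ k)).filter (fun u => u ∈ S)).card
        + ((G.neighborFinset (ψ k)).filter (fun u => ¬ u ∈ S)).card
        = (G.neighborFinset (ψ k)).card :=
      Finset.card_filter_add_card_filter_not (fun u => u ∈ S)
    have h2' : (G.neighborFinset (ψ k)).card = 4 := hdeg (ψ k) (hψS k)
    have h3 : (Forb (ψ k)).card
        ≤ ((G.neighborFinset (ψ k)).filter (fun u => ¬ u ∈ S)).card := by
      simp only [hForb]; exact Finset.card_image_le
    have h4 := hL (ψ k)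
    have h5 : (L (ψ k)).card ≤ (A (ψ k)).card + (Forb (ψ k)).card := by
      rw [hA]; exact Finset.card_le_card_sdiff_add_card
    omega
  -- basic adjacency facts
  have hadjsub : ∀ k : Fin (n + 2), H.Adj k (k - 1) := by
    intro k
    rw [hH, sup_adj]
    exact Or.inl (cycleGraph_adj.mpr (Or.inl (by ring)))
  have hadjadd : ∀ k : Fin (n + 2), H.Adj k (k + 1) := by
    intro k
    rw [hH, sup_adj]
    exact Or.inl (cycleGraph_adj.mpr (Or.inr (by ring)))
  have hsubne : ∀ k : Fin (n + 2), k - 1 ≠ k + 1 := by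
    intro k hk
    rw [sub_eq_add_neg] at hk
    have h' : (-1 : Fin (n + 2)) = 1 := add_left_cancel hk
    have := congrArg Fin.val h'
    rw [Fin.coe_neg_one, Fin.val_one] at this
    omega
  have hne2 : ∀ a b : Fin (n + 2), ¬ (cycleGraph (n+2)).Adj a b → b ≠ a - 1 ∧ b ≠ a + 1 := by
    intro a b hnadj
    constructor
    · intro hb
      exact hnadj (cycleGraph_adj.mpr (Or.inl (by rw [hb]; ring)))
    · intro hb
      exact hnadj (cycleGraph_adj.mpr (Or.inr (by rw [hb]; ring)))
  have hij : H.Adj i j := by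
    rw [hH, sup_adj]
    exact Or.inr ((fromEdgeSet_adj _).mpr ⟨Set.mem_singleton _, hne⟩)
  have hA2 : ∀ k, 2 ≤ (A (ψ k)).card := by
    intro k
    have := hAcard k {k - 1, k + 1} (by
      intro x hx
      rcases Finset.mem_insert.mp hx with rfl | hx
      · exact hadjsub k
      · rw [Finset.mem_singleton] at hx; subst hx; exact hadjadd k)
    rwa [Finset.card_pair (hsubne k)] at this
  have hA3i : 3 ≤ (A (ψ i)).card := by
    obtain ⟨hj1, hj2⟩ := hne2 i j hnonconsec
    have := hAcard i (insert j {i - 1, i + 1}) (by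
      intro x hx
      rcases Finset.mem_insert.mp hx with rfl | hx
      · exact hij
      · rcases Finset.mem_insert.mp hx with rfl | hx
        · exact hadjsub i
        · rw [Finset.mem_singleton] at hx; subst hx; exact hadjadd i)
    rwa [Finset.card_insert_of_notMem (by
        simp only [Finset.mem_insert, Finset.mem_singleton, not_or]
        exact ⟨hj1, hj2⟩),
      Finset.card_pair (hsubne i)] at this
  have hA3j : 3 ≤ (A (ψ j)).card := by
    have hnadj' : ¬ (cycleGraph (n+2)).Adj j i := fun h => hnonconsec h.symm
    obtain ⟨hi1, hi2⟩ := hne2 j i hnadj'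
    have := hAcard j (insert i {j - 1, j + 1}) (by
      intro x hx
      rcases Finset.mem_insert.mp hx with rfl | hx
      · exact hij.symm
      · rcases Finset.mem_insert.mp hx with rfl | hx
        · exact hadjsub j
        · rw [Finset.mem_singleton] at hx; subst hx; exact hadjadd j)
    rwa [Finset.card_insert_of_notMem (by
        simp only [Finset.mem_insert, Finset.mem_singleton, not_or]
        exact ⟨hi1, hi2⟩),
      Finset.card_pair (hsubne j)] at this
  obtain ⟨g, hg1, hg2⟩ := chorded_core (n + 2) hm i j hne hnonconsec (fun k => A (ψ k))
    (fun k => hA2 k) hA3i hA3j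
  have hgA : ∀ (v : V) (hv : v ∈ S), g (e ⟨v, hv⟩) ∈ A v := by
    intro v hv
    have := hg1 (e ⟨v, hv⟩)
    rwa [hψe v hv] at this
  refine ⟨fun v => if h : v ∈ S then g (e ⟨v, h⟩) else f ⟨v, h⟩, ?_, ?_⟩
  · intro v
    by_cases h : v ∈ S
    · simp only [dif_pos h]
      have := hgA v h
      simp only [hA] at this
      simp only [hA, Finset.mem_sdiff] at this
      exact this.1
    · simp only [dif_neg h]
      exact hf1 ⟨v, h⟩
  · intro x y hxy
    by_cases hx : x ∈ S <;> by_cases hy : y ∈ S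
    · simp only [dif_pos hx, dif_pos hy]
      apply hg2
      have hind : (G.induce S).Adj ⟨x, hx⟩ ⟨y, hy⟩ := hxy
      exact e.map_adj_iff.mpr hind
    · simp only [dif_pos hx, dif_neg hy]
      have hgx := hgA x hx
      have hfy : f ⟨y, hy⟩ ∈ Forb x := by
        simp only [hForb]
        apply Finset.mem_image.mpr
        refine ⟨y, ?_, ?_⟩
        · rw [Finset.mem_filter, SimpleGraph.mem_neighborFinset]
          exact ⟨hxy, hy⟩
        · simp only [hfc]; simp only [dif_neg hy]
      intro hc
      simp only [hA, Finset.mem_sdiff] at hgx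
      exact hgx.2 (hc ▸ hfy)
    · simp only [dif_neg hx, dif_pos hy]
      have hgy := hgA y hy
      have hfx : f ⟨x, hx⟩ ∈ Forb y := by
        simp only [hForb]
        apply Finset.mem_image.mpr
        refine ⟨x, ?_, ?_⟩
        · rw [Finset.mem_filter, SimpleGraph.mem_neighborFinset]
          exact ⟨hxy.symm, hx⟩
        · simp only [hfc]; simp only [dif_neg hx]
      intro hc
      simp only [hA, Finset.mem_sdiff] at hgy
      exact hgy.2 (hc ▸ hfx)
    · simp only [dif_neg hx, dif_neg hy]
      have hind : (G.induce Sᶜ).Adj ⟨x, hx⟩ ⟨y, hy⟩ := hxy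
      exact hf2 ⟨x, hx⟩ ⟨y, hy⟩ hind
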